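/- There exists a constant C > 0 such that for every Schwartz function f : ℝ² → ℝ, ‖f‖_{L^∞(ℝ²)} ≤ C · (‖f‖_{L²}^{1/2}‖∂₂f‖_{L²}^{1/2} + ‖∂₁f‖_{L²}^{1/2}‖∂₁₂f‖_{L²}^{1/2}). (Two-dimensional anisotropic Agmon-type inequality used in the proof of the appendix lemma.) -/

import Mathlib

open MeasureTheory SchwartzMap Filter

set_option maxHeartbeats 1600000

noncomputable section

/-- Partial derivative of a Schwartz function on `ℝ²` in the `i`-th coordinate direction. -/
def pd2 (i : Fin 2) (f : SchwartzMap (EuclideanSpace ℝ (Fin 2)) ℝ) :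
    SchwartzMap (EuclideanSpace ℝ (Fin 2)) ℝ :=
  LineDeriv.lineDerivOpCLM ℝ (SchwartzMap (EuclideanSpace ℝ (Fin 2)) ℝ) (EuclideanSpace.single i (1 : ℝ)) f

/-- The `L²` norm (w.r.t. Lebesgue measure on `ℝ²`). -/
def L2 (f : SchwartzMap (EuclideanSpace ℝ (Fin 2)) ℝ) : ℝ :=
  (eLpNorm f 2 volume).toReal

/-- The `L^∞` (essential supremum) norm on `ℝ²`. -/
def Linf (f : SchwartzMap (EuclideanSpace ℝ (Fin 2)) ℝ) : ℝ :=
  (eLpNorm f ⊤ volume).toReal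

namespace AgmonAux

/-! ### Generic lemmas -/

lemma sq_le_ftc (u u' : ℝ → ℝ) (hd : ∀ t, HasDerivAt u (u' t) t)
    (h0 : Tendsto u atBot (nhds 0)) (hi : Integrable (fun t => u t * u' t)) (a : ℝ) :
    u a ^ 2 ≤ 2 * ∫ t, |u t * u' t| := by
  have hsq : ∀ t, HasDerivAt (fun s => u s ^ 2) (2 * (u t * u' t)) t := by
    intro t
    simpa [mul_comm, mul_assoc, mul_left_comm] using (hd t).fun_pow 2
  have h0' : Tendsto (fun s => u s ^ 2) atBot (nhds 0) := by
    simpa using (h0.pow 2)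
  have key := integral_Iic_of_hasDerivAt_of_tendsto' (f := fun s => u s ^ 2)
    (f' := fun t => 2 * (u t * u' t)) (a := a) (fun t _ => hsq t)
    ((hi.const_mul 2).integrableOn) h0'
  have h1 : ∫ t in Set.Iic a, 2 * (u t * u' t) ≤ ∫ t in Set.Iic a, 2 * |u t * u' t| := by
    apply integral_mono_ae ((hi.const_mul 2).integrableOn)
      (((hi.abs).const_mul 2).integrableOn)
    filter_upwards with t
    have := le_abs_self (u t * u' t); nlinarith
  have h2 : ∫ t in Set.Iic a, 2 * |u t * u' t| ≤ ∫ t, 2 * |u t * u' t| := by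
    apply setIntegral_le_integral ((hi.abs).const_mul 2)
    filter_upwards with t; positivity
  calc u a ^ 2 = ∫ t in Set.Iic a, 2 * (u t * u' t) := by simpa using key.symm
  _ ≤ ∫ t in Set.Iic a, 2 * |u t * u' t| := h1
  _ ≤ ∫ t, 2 * |u t * u' t| := h2
  _ = 2 * ∫ t, |u t * u' t| := integral_const_mul 2 _

lemma int_rpow_two {α : Type*} [MeasurableSpace α] {μ : Measure α} (u : α → ℝ) :
    ∫ a, |u a| ^ (2:ℝ) ∂μ = ∫ a, u a ^ 2 ∂μ := by
  apply integral_congr_ae; filter_upwards with a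
  rw [show ((2:ℝ)) = ((2:ℕ):ℝ) by norm_num, Real.rpow_natCast, sq_abs]

lemma cs_int {α : Type*} [MeasurableSpace α] {μ : Measure α} (u w : α → ℝ)
    (hu : MemLp u 2 μ) (hw : MemLp w 2 μ) :
    ∫ a, |u a * w a| ∂μ ≤ (∫ a, u a ^ 2 ∂μ) ^ (1/2 : ℝ) * (∫ a, w a ^ 2 ∂μ) ^ (1/2 : ℝ) := by
  have h2 : (2 : ℝ).HolderConjugate 2 := by constructor <;> norm_num
  have h := integral_mul_le_Lp_mul_Lq_of_nonneg (μ := μ) h2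
    (f := fun a => |u a|) (g := fun a => |w a|)
    (Filter.Eventually.of_forall fun a => abs_nonneg _)
    (Filter.Eventually.of_forall fun a => abs_nonneg _)
    (by rw [show ENNReal.ofReal 2 = 2 by norm_num]; exact hu.abs) (by rw [show ENNReal.ofReal 2 = 2 by norm_num]; exact hw.abs)
  rw [int_rpow_two u, int_rpow_two w] at h
  simpa [abs_mul] using h

section SchwartzGeneric

variable {E : Type*} [NormedAddCommGroup E] [NormedSpace ℝ E]

lemma schwartz_bdd (f : 𝓢(E, ℝ)) : ∃ C, ∀ x, ‖f x‖ ≤ C :=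
  ⟨‖f.toBoundedContinuousFunction‖, fun x => by
    simpa using f.toBoundedContinuousFunction.norm_coe_le_norm x⟩

lemma line_temperate' (p v : E) : Function.HasTemperateGrowth (fun s : ℝ => p + s • v) := by
  have hL : (fun s : ℝ => p + s • v) = fun s : ℝ =>
      p + (ContinuousLinearMap.id ℝ ℝ).smulRight v s := by
    funext s; simp
  have hd : Differentiable ℝ (fun s : ℝ => p + s • v) := by
    rw [hL]; exact (((ContinuousLinearMap.id ℝ ℝ).smulRight v).differentiable).const_add _
  apply Function.HasTemperateGrowth.of_fderiv (k := 1) (C := ‖p‖ + ‖v‖) _ hd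
  · intro x
    calc ‖p + x • v‖ ≤ ‖p‖ + ‖x‖ * ‖v‖ := by
          refine (norm_add_le _ _).trans ?_; rw [norm_smul]
    _ ≤ (‖p‖ + ‖v‖) * (1 + ‖x‖) ^ 1 := by
          rw [pow_one]; ring_nf; nlinarith [norm_nonneg p, norm_nonneg v, norm_nonneg x]
  · have : (fderiv ℝ (fun s : ℝ => p + s • v)) =
        fun _ => (ContinuousLinearMap.id ℝ ℝ).smulRight v := by
      funext s
      rw [hL]
      exact (((((ContinuousLinearMap.id ℝ ℝ).smulRight v)).hasFDerivAt (x := s)).const_add p).fderiv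
    rw [this]
    exact Function.HasTemperateGrowth.const _

lemma line_antilipschitz' (p v : E) (hv : ‖v‖ = 1) :
    AntilipschitzWith 1 (fun s : ℝ => p + s • v) := by
  have : Isometry (fun s : ℝ => p + s • v) := by
    apply Isometry.of_dist_eq
    intro s t
    rw [dist_eq_norm, dist_eq_norm]
    have : p + s • v - (p + t • v) = (s - t) • v := by module
    rw [this, norm_smul, hv, mul_one, Real.norm_eq_abs]
  simpa using this.antilipschitz

/-- Restriction of a Schwartz function to a line, as a Schwartz function of one variable. -/
def lineS (p v : E) (hv : ‖v‖ = 1) : 𝓢(E, ℝ) →L[ℝ] 𝓢(ℝ, ℝ) :=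
  compCLMOfAntilipschitz ℝ (line_temperate' p v) (line_antilipschitz' p v hv)

lemma lineS_apply (p v : E) (hv : ‖v‖ = 1) (f : 𝓢(E, ℝ)) (s : ℝ) :
    lineS p v hv f s = f (p + s • v) := rfl

lemma hasDerivAt_line (f : 𝓢(E, ℝ)) (p v : E) (s : ℝ) :
    HasDerivAt (fun s : ℝ => f (p + s • v)) ((LineDeriv.lineDerivOpCLM ℝ 𝓢(E, ℝ) v f) (p + s • v)) s := by
  have hg : HasDerivAt (fun s : ℝ => p + s • v) v s := by
    simpa using ((hasDerivAt_id s).smul_const v).const_add p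
  have hf := (f.differentiableAt (x := p + s • v)).hasFDerivAt
  exact hf.comp_hasDerivAt s hg

lemma tendsto_atBot_schwartz (u : 𝓢(ℝ, ℝ)) : Tendsto u atBot (nhds 0) := by
  have := zero_at_infty u
  rw [cocompact_eq_atBot_atTop] at this
  exact this.mono_left le_sup_left

variable [MeasureSpace E] [BorelSpace E] [SecondCountableTopology E]
  [(volume : Measure E).HasTemperateGrowth]

lemma schwartz_sq_integrable (f : 𝓢(E, ℝ)) : Integrable (fun x => f x ^ 2) volume := by
  have := (f.integrable (μ := volume)).bdd_mul f.continuous.aestronglyMeasurable (Filter.Eventually.of_forall (schwartz_bdd f).choose_spec)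
  simpa [pow_two] using this

lemma schwartz_memℒp_two (f : 𝓢(E, ℝ)) : MemLp f 2 volume := by
  rw [memLp_two_iff_integrable_sq f.continuous.aestronglyMeasurable]
  exact schwartz_sq_integrable f

lemma schwartz_mul_abs_integrable (f g : 𝓢(E, ℝ)) :
    Integrable (fun x => |f x * g x|) volume :=
  ((g.integrable (μ := volume)).bdd_mul f.continuous.aestronglyMeasurable (Filter.Eventually.of_forall (schwartz_bdd f).choose_spec)).abs

lemma L2_eq' (f : 𝓢(E, ℝ)) :
    (eLpNorm f 2 volume).toReal = (∫ x, f x ^ 2) ^ (1/2 : ℝ) := by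
  have hm := schwartz_memℒp_two f
  rw [hm.eLpNorm_eq_integral_rpow_norm (by norm_num) (by norm_num)]
  rw [ENNReal.toReal_ofReal (by positivity)]
  have h22 : (∫ a, ‖f a‖ ^ ENNReal.toReal 2 ∂(volume : Measure E)) = ∫ x, f x ^ 2 := by
    rw [ENNReal.toReal_ofNat]
    simpa [Real.norm_eq_abs] using int_rpow_two (μ := (volume : Measure E)) f
  rw [h22]
  norm_num

lemma line_sq_le (f : 𝓢(E, ℝ)) (p v : E) (hv : ‖v‖ = 1) (a : ℝ) :
    f (p + a • v) ^ 2 ≤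
      2 * ∫ s : ℝ, |f (p + s • v) * (LineDeriv.lineDerivOpCLM ℝ 𝓢(E, ℝ) v f) (p + s • v)| := by
  have hu : (fun s : ℝ => f (p + s • v)) = ⇑(lineS p v hv f) := rfl
  have hw : (fun s : ℝ => (LineDeriv.lineDerivOpCLM ℝ 𝓢(E, ℝ) v f) (p + s • v)) =
      ⇑(lineS p v hv (LineDeriv.lineDerivOpCLM ℝ 𝓢(E, ℝ) v f)) := rfl
  have h0 : Tendsto (fun s : ℝ => f (p + s • v)) atBot (nhds 0) := by
    rw [hu]; exact tendsto_atBot_schwartz _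
  have hi : Integrable (fun s : ℝ => f (p + s • v) * (LineDeriv.lineDerivOpCLM ℝ 𝓢(E, ℝ) v f) (p + s • v)) volume := by
    have : Integrable (fun t : ℝ =>
        (lineS p v hv f) t * (lineS p v hv (LineDeriv.lineDerivOpCLM ℝ 𝓢(E, ℝ) v f)) t) volume :=
      ((lineS p v hv (LineDeriv.lineDerivOpCLM ℝ 𝓢(E, ℝ) v f)).integrable).bdd_mul
        (lineS p v hv f).continuous.aestronglyMeasurable (Filter.Eventually.of_forall (schwartz_bdd _).choose_spec)
    exact this
  exact sq_le_ftc (fun s : ℝ => f (p + s • v)) (fun s : ℝ => (LineDeriv.lineDerivOpCLM ℝ 𝓢(E, ℝ) v f) (p + s • v))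
    (fun t => hasDerivAt_line f p v t) h0 hi a

end SchwartzGeneric

/-! ### The plane -/

abbrev V2 : Type := EuclideanSpace ℝ (Fin 2)

def e0 : V2 := EuclideanSpace.single 0 1
def e1 : V2 := EuclideanSpace.single 1 1

lemma norm_e0 : ‖e0‖ = 1 := by simp [e0]
lemma norm_e1 : ‖e1‖ = 1 := by simp [e1]

def Pe : (ℝ × ℝ) ≃ᵐ V2 :=
  (MeasurableEquiv.finTwoArrow).symm.trans (MeasurableEquiv.toLp 2 (Fin 2 → ℝ))

lemma Pe_mp : MeasurePreserving Pe volume volume :=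
  ((EuclideanSpace.volume_preserving_symm_measurableEquiv_toLp (Fin 2)).symm).comp
    (MeasureTheory.volume_preserving_finTwoArrow ℝ).symm

lemma Pe_apply (x y : ℝ) : Pe (x, y) = x • e0 + y • e1 := by
  ext j
  fin_cases j <;>
    simp [Pe, e0, e1, MeasurableEquiv.finTwoArrow]

/-- The parametrization of the plane. -/
def H (x y : ℝ) : V2 := Pe (x, y)

lemma H_fst (x y : ℝ) : H x y = H 0 y + x • e0 := by
  simp only [H, Pe_apply]; module

lemma H_snd (x y : ℝ) : H x y = H x 0 + y • e1 := by
  simp only [H, Pe_apply]; module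

lemma line_sq_le_fst (g : 𝓢(V2, ℝ)) (x t : ℝ) :
    g (H x t) ^ 2 ≤ 2 * ∫ s, |g (H s t) * (LineDeriv.lineDerivOpCLM ℝ 𝓢(V2, ℝ) e0 g) (H s t)| := by
  have key := line_sq_le g (H 0 t) e0 norm_e0 x
  rw [← H_fst x t] at key
  have h2 : (fun s => |g (H 0 t + s • e0) * (LineDeriv.lineDerivOpCLM ℝ 𝓢(V2, ℝ) e0 g) (H 0 t + s • e0)|)
      = fun s => |g (H s t) * (LineDeriv.lineDerivOpCLM ℝ 𝓢(V2, ℝ) e0 g) (H s t)| := by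
    funext s; rw [← H_fst s t]
  rw [show (∫ s, |g (H 0 t + s • e0) * (LineDeriv.lineDerivOpCLM ℝ 𝓢(V2, ℝ) e0 g) (H 0 t + s • e0)|)
      = ∫ s, |g (H s t) * (LineDeriv.lineDerivOpCLM ℝ 𝓢(V2, ℝ) e0 g) (H s t)| from congrArg _ h2] at key
  exact key

lemma line_sq_le_snd (g : 𝓢(V2, ℝ)) (x y : ℝ) :
    g (H x y) ^ 2 ≤ 2 * ∫ t, |g (H x t) * (LineDeriv.lineDerivOpCLM ℝ 𝓢(V2, ℝ) e1 g) (H x t)| := by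
  have key := line_sq_le g (H x 0) e1 norm_e1 y
  rw [← H_snd x y] at key
  have h2 : (fun t => |g (H x 0 + t • e1) * (LineDeriv.lineDerivOpCLM ℝ 𝓢(V2, ℝ) e1 g) (H x 0 + t • e1)|)
      = fun t => |g (H x t) * (LineDeriv.lineDerivOpCLM ℝ 𝓢(V2, ℝ) e1 g) (H x t)| := by
    funext t; rw [← H_snd x t]
  rw [show (∫ t, |g (H x 0 + t • e1) * (LineDeriv.lineDerivOpCLM ℝ 𝓢(V2, ℝ) e1 g) (H x 0 + t • e1)|)
      = ∫ t, |g (H x t) * (LineDeriv.lineDerivOpCLM ℝ 𝓢(V2, ℝ) e1 g) (H x t)| from congrArg _ h2] at key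
  exact key

lemma sect_snd_eq (g : 𝓢(V2, ℝ)) (x : ℝ) :
    (fun t => g (H x t)) = ⇑(lineS (H x 0) e1 norm_e1 g) := by
  funext t; rw [H_snd x t]; rfl

lemma marginal_le (g : 𝓢(V2, ℝ)) (x : ℝ) :
    ∫ t, (g (H x t)) ^ 2 ≤ 2 * ∫ z : V2, |g z * (LineDeriv.lineDerivOpCLM ℝ 𝓢(V2, ℝ) e0 g) z| := by
  set gd := LineDeriv.lineDerivOpCLM ℝ 𝓢(V2, ℝ) e0 g with hgd
  have hint : Integrable (fun z : V2 => |g z * gd z|) volume :=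
    schwartz_mul_abs_integrable g gd
  have hprod : Integrable (fun q : ℝ × ℝ => |g (Pe q) * gd (Pe q)|) volume := by
    exact (Pe_mp.integrable_comp_emb Pe.measurableEmbedding).2 hint
  have hmarg : Integrable (fun t : ℝ => ∫ s, |g (H s t) * gd (H s t)|) volume := by
    have := hprod.integral_prod_right
    exact this
  have hlhs : Integrable (fun t : ℝ => (g (H x t)) ^ 2) volume := by
    rw [show (fun t : ℝ => (g (H x t)) ^ 2)
        = fun t => ((lineS (H x 0) e1 norm_e1 g) t) ^ 2 by
      rw [← sect_snd_eq]]
    exact schwartz_sq_integrable _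
  have hmono : ∫ t, (g (H x t)) ^ 2 ≤ ∫ t, 2 * ∫ s, |g (H s t) * gd (H s t)| := by
    apply integral_mono_ae hlhs (hmarg.const_mul 2)
    filter_upwards with t
    exact line_sq_le_fst g x t
  have hfub : ∫ t, (∫ s, |g (H s t) * gd (H s t)|) = ∫ z : V2, |g z * gd z| := by
    rw [← Pe_mp.integral_comp Pe.measurableEmbedding (fun z => |g z * gd z|)]
    exact (integral_prod_symm _ hprod).symm
  calc ∫ t, (g (H x t)) ^ 2 ≤ ∫ t, 2 * ∫ s, |g (H s t) * gd (H s t)| := hmono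
  _ = 2 * ∫ t, ∫ s, |g (H s t) * gd (H s t)| := integral_const_mul 2 _
  _ = 2 * ∫ z : V2, |g z * gd z| := by rw [hfub]

end AgmonAux

open AgmonAux

/-- Two-dimensional anisotropic Agmon-type inequality:
`‖f‖_{L^∞(ℝ²)} ≲ ‖f‖^{1/2}‖∂₂f‖^{1/2} + ‖∂₁f‖^{1/2}‖∂₁₂f‖^{1/2}`. -/
theorem anisotropic_agmon_2d :
    ∃ C : ℝ, 0 < C ∧ ∀ f : SchwartzMap (EuclideanSpace ℝ (Fin 2)) ℝ,
      Linf f ≤ C * (L2 f ^ (1/2 : ℝ) * L2 (pd2 1 f) ^ (1/2 : ℝ) +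
        L2 (pd2 0 f) ^ (1/2 : ℝ) * L2 (pd2 0 (pd2 1 f)) ^ (1/2 : ℝ)) := by
  refine ⟨1, one_pos, fun f => ?_⟩
  have hA : L2 f = (∫ z : V2, f z ^ 2) ^ (1/2:ℝ) := L2_eq' f
  have hB : L2 (pd2 0 f) = (∫ z : V2, (pd2 0 f) z ^ 2) ^ (1/2:ℝ) := L2_eq' _
  have hD : L2 (pd2 1 f) = (∫ z : V2, (pd2 1 f) z ^ 2) ^ (1/2:ℝ) := L2_eq' _
  have hE : L2 (pd2 0 (pd2 1 f)) = (∫ z : V2, (pd2 0 (pd2 1 f)) z ^ 2) ^ (1/2:ℝ) := L2_eq' _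
  set A := L2 f
  set B := L2 (pd2 0 f)
  set D := L2 (pd2 1 f)
  set Em := L2 (pd2 0 (pd2 1 f))
  have hA0 : 0 ≤ A := ENNReal.toReal_nonneg
  have hB0 : 0 ≤ B := ENNReal.toReal_nonneg
  have hD0 : 0 ≤ D := ENNReal.toReal_nonneg
  have hE0 : 0 ≤ Em := ENNReal.toReal_nonneg
  set X := A ^ (1/2:ℝ) * D ^ (1/2:ℝ) with hX
  set Y := B ^ (1/2:ℝ) * Em ^ (1/2:ℝ) with hY
  have hX0 : 0 ≤ X := by positivity
  have hY0 : 0 ≤ Y := by positivity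
  -- the two basic 2D integrals
  set I1 : ℝ := ∫ z : V2, |f z * (pd2 0 f) z| with hI1def
  set I2 : ℝ := ∫ z : V2, |(pd2 1 f) z * (pd2 0 (pd2 1 f)) z| with hI2def
  have hI10 : 0 ≤ I1 := integral_nonneg fun z => abs_nonneg _
  have hI20 : 0 ≤ I2 := integral_nonneg fun z => abs_nonneg _
  have hI1 : I1 ≤ A * B := by
    have := cs_int (μ := (volume : Measure V2)) (fun z => f z) (fun z => (pd2 0 f) z)
      (schwartz_memℒp_two f) (schwartz_memℒp_two (pd2 0 f))
    rw [hA, hB]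
    exact this
  have hI2 : I2 ≤ D * Em := by
    have := cs_int (μ := (volume : Measure V2)) (fun z => (pd2 1 f) z)
      (fun z => (pd2 0 (pd2 1 f)) z)
      (schwartz_memℒp_two (pd2 1 f)) (schwartz_memℒp_two (pd2 0 (pd2 1 f)))
    rw [hD, hE]
    exact this
  -- pointwise bound
  have hpt : ∀ z : V2, |f z| ≤ X + Y := by
    intro z
    set x := (Pe.symm z).1 with hxdef
    set y := (Pe.symm z).2 with hydef
    have hz : H x y = z := by
      show Pe (x, y) = z
      rw [hxdef, hydef, Prod.mk.eta]
      simp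
    -- step 1 and 2
    have h1 : f z ^ 2 ≤ 2 * ∫ t, |f (H x t) * (pd2 1 f) (H x t)| := by
      rw [← hz]
      exact line_sq_le_snd f x y
    have hsec1 : (fun t => f (H x t)) = ⇑(lineS (H x 0) e1 norm_e1 f) := sect_snd_eq f x
    have hsec2 : (fun t => (pd2 1 f) (H x t))
        = ⇑(lineS (H x 0) e1 norm_e1 (pd2 1 f)) := sect_snd_eq (pd2 1 f) x
    have h2 : ∫ t, |f (H x t) * (pd2 1 f) (H x t)| ≤
        (∫ t, f (H x t) ^ 2) ^ (1/2:ℝ) * (∫ t, (pd2 1 f) (H x t) ^ 2) ^ (1/2:ℝ) := by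
      apply cs_int
      · rw [hsec1]; exact schwartz_memℒp_two _
      · rw [hsec2]; exact schwartz_memℒp_two _
    have h3 : ∫ t, f (H x t) ^ 2 ≤ 2 * I1 := marginal_le f x
    have h4 : ∫ t, (pd2 1 f) (H x t) ^ 2 ≤ 2 * I2 := marginal_le (pd2 1 f) x
    have hs10 : 0 ≤ ∫ t, f (H x t) ^ 2 := integral_nonneg fun t => sq_nonneg _
    have hs20 : 0 ≤ ∫ t, (pd2 1 f) (H x t) ^ 2 := integral_nonneg fun t => sq_nonneg _
    have h5 : f z ^ 2 ≤ 2 * ((2 * I1) ^ (1/2:ℝ) * (2 * I2) ^ (1/2:ℝ)) := by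
      have r1 : (∫ t, f (H x t) ^ 2) ^ (1/2:ℝ) ≤ (2 * I1) ^ (1/2:ℝ) :=
        Real.rpow_le_rpow hs10 h3 (by norm_num)
      have r2 : (∫ t, (pd2 1 f) (H x t) ^ 2) ^ (1/2:ℝ) ≤ (2 * I2) ^ (1/2:ℝ) :=
        Real.rpow_le_rpow hs20 h4 (by norm_num)
      have := mul_le_mul r1 r2 (Real.rpow_nonneg hs20 _) (Real.rpow_nonneg (by positivity) _)
      nlinarith [h1, h2, this, Real.rpow_nonneg hs10 (1/2:ℝ), Real.rpow_nonneg hs20 (1/2:ℝ)]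
    have h6 : f z ^ 2 ≤ 4 * (X * Y) := by
      have r1 : (2 * I1) ^ (1/2:ℝ) ≤ (2 * (A * B)) ^ (1/2:ℝ) :=
        Real.rpow_le_rpow (by positivity) (by nlinarith) (by norm_num)
      have r2 : (2 * I2) ^ (1/2:ℝ) ≤ (2 * (D * Em)) ^ (1/2:ℝ) :=
        Real.rpow_le_rpow (by positivity) (by nlinarith) (by norm_num)
      have e1' : (2 * (A * B)) ^ (1/2:ℝ) * (2 * (D * Em)) ^ (1/2:ℝ)
          = 2 * (X * Y) := by
        have hAB : (0:ℝ) ≤ A * B := mul_nonneg hA0 hB0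
        have hDE : (0:ℝ) ≤ D * Em := mul_nonneg hD0 hE0
        rw [Real.mul_rpow (by norm_num) hAB, Real.mul_rpow (by norm_num) hDE,
            Real.mul_rpow hA0 hB0, Real.mul_rpow hD0 hE0]
        have h22 : (2:ℝ) ^ (1/2:ℝ) * (2:ℝ) ^ (1/2:ℝ) = 2 := by
          rw [← Real.rpow_add (by norm_num)]; norm_num
        rw [hX, hY]
        linear_combination (A ^ (1/2:ℝ) * B ^ (1/2:ℝ) * D ^ (1/2:ℝ) * Em ^ (1/2:ℝ)) * h22
      have hmul : (2 * I1) ^ (1/2:ℝ) * (2 * I2) ^ (1/2:ℝ)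
          ≤ (2 * (A * B)) ^ (1/2:ℝ) * (2 * (D * Em)) ^ (1/2:ℝ) :=
        mul_le_mul r1 r2 (Real.rpow_nonneg (by positivity) _) (Real.rpow_nonneg (by positivity) _)
      nlinarith [h5, hmul, e1']
    nlinarith [h6, sq_nonneg (X - Y), sq_abs (f z), abs_nonneg (f z)]
  -- conclude
  rw [one_mul]
  show (eLpNorm f ⊤ volume).toReal ≤ X + Y
  have hb : eLpNorm f ⊤ volume ≤ ENNReal.ofReal (X + Y) := by
    rw [eLpNorm_exponent_top]
    apply eLpNormEssSup_le_of_ae_bound (C := X + Y)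
    filter_upwards with z
    simpa [Real.norm_eq_abs] using hpt z
  exact ENNReal.toReal_le_of_le_ofReal (by positivity) hb

end
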